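/- Let g be a monotone hierarchy with root i_0, and for a node i at depth ρ(i) and d ≤ ρ(i), the number of nodes at distance at most d from i equals Q(i,d) = p(i_{ρ(i)−d}, 0) + ∑_{r=1}^{d−1} [p(i_{ρ(i)−d+r}, r−1) + p(i_{ρ(i)−d+r}, r)] + p(i, d−1) + p(i, d), where i_0, i_1, ..., i_{ρ(i)} = i is the unique path from the root to i and p(k,ℓ) is the number of successors of k at distance ℓ, counting k itself when ℓ = 0. For any i, j with ρ(j) = ρ(i) + 1 and any d ≤ ρ(i), Q(i,d) ≥ Q(j,d). -/

import Mathlib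

/-- `j` is a successor of `i` in the tree `g` oriented away from the root `r`. -/
def Succ {n : ℕ} (g : SimpleGraph (Fin n)) (r i j : Fin n) : Prop :=
  i ≠ j ∧ g.dist r j = g.dist r i + g.dist i j

/-- `succCount g r i ℓ`: number of successors of `i` at distance `ℓ` from `i`
(counting `i` itself when `ℓ = 0`). -/
noncomputable def succCount {n : ℕ} (g : SimpleGraph (Fin n)) (r i : Fin n) (ℓ : ℕ) : ℕ :=
  Nat.card {j : Fin n | g.dist i j = ℓ ∧ g.dist r j = g.dist r i + ℓ}

/-- `Q g i d`: number of nodes at distance at most `d` from `i`. -/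
noncomputable def ballCount {n : ℕ} (g : SimpleGraph (Fin n)) (i : Fin n) (d : ℕ) : ℕ :=
  Nat.card {k : Fin n | g.dist i k ≤ d}

/-- A monotone hierarchy (see the paper's definition). -/
def IsMonotoneHierarchy {n : ℕ} (g : SimpleGraph (Fin n)) [DecidableRel g.Adj]
    (r : Fin n) (h : ℕ) : Prop :=
  g.IsTree ∧
  (∀ i j, g.dist r i < g.dist r j → g.degree j ≤ g.degree i) ∧
  (∀ i j, g.dist r i = g.dist r j → g.degree j < g.degree i →
    ∀ k l, Succ g r i k → Succ g r j l → g.dist r k = g.dist r l →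
      g.degree l ≤ g.degree k) ∧
  (∀ i j, g.dist r i = g.dist r j → g.degree i = g.degree j →
    (∃ k l, Succ g r i k ∧ Succ g r j l ∧ g.dist r k = g.dist r l ∧
      g.degree l < g.degree k) →
    ∀ k l, Succ g r i k → Succ g r j l → g.dist r k = g.dist r l →
      g.degree l ≤ g.degree k) ∧
  (∀ i, g.degree i = 1 → g.dist r i = h)



open SimpleGraph Finset

variable {n : ℕ} {g : SimpleGraph (Fin n)} {r u v w k : Fin n}

/-- A walk whose length equals the distance is a path. -/
lemma walk_isPath_of_length_eq_dist (p : g.Walk u v) (hp : p.length = g.dist u v) :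
    p.IsPath := by
  have h1 : g.dist u v ≤ p.bypass.length := SimpleGraph.dist_le _
  have h2 : p.bypass = p := p.bypass_eq_self_of_length_le (by omega)
  rw [← h2]; exact p.bypass_isPath

lemma exists_geodesic (hc : g.Connected) (u v : Fin n) :
    ∃ p : g.Walk u v, p.length = g.dist u v ∧ p.IsPath := by
  obtain ⟨p, hp⟩ := (hc u v).exists_walk_length_eq_dist
  exact ⟨p, hp, walk_isPath_of_length_eq_dist p hp⟩

lemma adj_dist_le_one (h : g.Adj u v) : g.dist u v ≤ 1 :=
  le_trans (SimpleGraph.dist_le (Walk.cons h Walk.nil)) (by simp)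

/-- In a tree, adjacent vertices are never equidistant from any vertex. -/
lemma tree_adj_dist_ne (ht : g.IsTree) (h : g.Adj u v) (w : Fin n) :
    g.dist w u ≠ g.dist w v := by
  intro heq
  obtain ⟨p, hp, hpath⟩ := exists_geodesic ht.isConnected w u
  have hvs : v ∉ p.support := by
    intro hv
    have hsp := p.take_spec hv
    have hlen : (p.takeUntil v hv).length + (p.dropUntil v hv).length = p.length := by
      rw [← Walk.length_append, hsp]
    have h1 : g.dist w v ≤ (p.takeUntil v hv).length := SimpleGraph.dist_le _
    have h2 : (p.dropUntil v hv).length ≠ 0 := fun h0 => h.ne' (Walk.eq_of_length_eq_zero h0)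
    omega
  have hq : (p.concat h).IsPath := by
    rw [← Walk.isPath_reverse_iff, Walk.reverse_concat, Walk.cons_isPath_iff]
    exact ⟨hpath.reverse, by simpa [Walk.support_reverse] using hvs⟩
  obtain ⟨p', hp', hpath'⟩ := exists_geodesic ht.isConnected w v
  have := ht.IsAcyclic.path_unique ⟨p.concat h, hq⟩ ⟨p', hpath'⟩
  have hlen : (p.concat h).length = p'.length := by rw [congrArg (fun q : g.Path w v => q.1.length) this]
  rw [Walk.length_concat, hp, hp', heq] at hlen
  omega

lemma tree_adj_dist (ht : g.IsTree) (h : g.Adj u v) (w : Fin n) :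
    g.dist w v = g.dist w u + 1 ∨ g.dist w u = g.dist w v + 1 := by
  have h1 : g.dist w v ≤ g.dist w u + 1 :=
    le_trans (ht.isConnected.dist_triangle (v := u)) (by have := adj_dist_le_one h; omega)
  have h2 : g.dist w u ≤ g.dist w v + 1 :=
    le_trans (ht.isConnected.dist_triangle (v := v)) (by have := adj_dist_le_one h.symm; omega)
  have := tree_adj_dist_ne ht h w
  omega

lemma tree_adj_dist' (ht : g.IsTree) (h : g.Adj u v) (w : Fin n) :
    g.dist v w = g.dist u w + 1 ∨ g.dist u w = g.dist v w + 1 := by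
  have := tree_adj_dist ht h w
  rw [SimpleGraph.dist_comm (u := w) (v := u), SimpleGraph.dist_comm (u := w) (v := v)] at this
  exact this

/-- In a tree two geodesics from `k` entering `u` through distinct neighbors are impossible. -/
lemma tree_merge (ht : g.IsTree) {c c' : Fin n} (hc : g.Adj c u) (hc' : g.Adj c' u)
    (hne : c ≠ c') {ℓ : ℕ} (h1 : g.dist c k = ℓ) (h2 : g.dist c' k = ℓ)
    (h3 : g.dist u k = ℓ + 1) : False := by
  rw [SimpleGraph.dist_comm] at h1 h2 h3
  obtain ⟨p, hp, _⟩ := exists_geodesic ht.isConnected k c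
  obtain ⟨p', hp', _⟩ := exists_geodesic ht.isConnected k c'
  have hq : (p.concat hc).IsPath := by
    apply walk_isPath_of_length_eq_dist
    rw [Walk.length_concat, hp, h1, h3]
  have hq' : (p'.concat hc').IsPath := by
    apply walk_isPath_of_length_eq_dist
    rw [Walk.length_concat, hp', h2, h3]
  have := ht.IsAcyclic.path_unique ⟨p.concat hc, hq⟩ ⟨p'.concat hc', hq'⟩
  have hw : (p.concat hc) = (p'.concat hc') := congrArg (fun q : g.Path k u => q.1) this
  have : (p.concat hc).reverse.getVert 1 = (p'.concat hc').reverse.getVert 1 := by rw [hw]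
  rw [Walk.reverse_concat, Walk.reverse_concat] at this
  simp only [Walk.getVert_cons_succ, Walk.getVert_zero] at this
  exact hne this

section PathLemmas

variable {D : ℕ} {path : ℕ → Fin n}

lemma dist_path_le (hc : g.Connected) (hadj : ∀ t < D, g.Adj (path t) (path (t + 1))) :
    ∀ s t, s ≤ t → t ≤ D → g.dist (path s) (path t) ≤ t - s := by
  intro s t
  induction t with
  | zero => intro hst _; interval_cases s; simp
  | succ t ih =>
    intro hst htD
    rcases Nat.lt_or_ge s (t + 1) with hlt | hge
    · have hs : s ≤ t := by omega
      have h1 := ih hs (by omega)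
      have h2 : g.dist (path t) (path (t + 1)) ≤ 1 := adj_dist_le_one (hadj t (by omega))
      have h3 := hc.dist_triangle (u := path s) (v := path t) (w := path (t + 1))
      omega
    · have : s = t + 1 := by omega
      subst this; simp

lemma dist_path_exact (hc : g.Connected) (hadj : ∀ t < D, g.Adj (path t) (path (t + 1)))
    (h0 : path 0 = r) (hD : g.dist r (path D) = D) :
    ∀ t ≤ D, g.dist r (path t) = t ∧ g.dist (path t) (path D) = D - t := by
  intro t htD
  have h1 : g.dist r (path t) ≤ t := by
    have := dist_path_le hc hadj 0 t (by omega) htD; rwa [h0, Nat.sub_zero] at this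
  have h2 : g.dist (path t) (path D) ≤ D - t := dist_path_le hc hadj t D htD le_rfl
  have h3 := hc.dist_triangle (u := r) (v := path t) (w := path D)
  omega

lemma dist_path_pair (hc : g.Connected) (hadj : ∀ t < D, g.Adj (path t) (path (t + 1)))
    (h0 : path 0 = r) (hD : g.dist r (path D) = D) :
    ∀ s t, s ≤ t → t ≤ D → g.dist (path s) (path t) = t - s := by
  intro s t hst htD
  have h1 := dist_path_le hc hadj s t hst htD
  have h2 := (dist_path_exact hc hadj h0 hD s (by omega)).1
  have h3 := (dist_path_exact hc hadj h0 hD t htD).1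
  have h4 := hc.dist_triangle (u := r) (v := path s) (w := path t)
  omega

variable (ht : g.IsTree) (hadj : ∀ t < D, g.Adj (path t) (path (t + 1)))
  (h0 : path 0 = r) (hD : g.dist r (path D) = D)

include ht hadj h0 hD

/-- One increasing step forces the next step to increase. -/
lemma vshape_stepB {k : Fin n} {s : ℕ} (hs : s + 2 ≤ D)
    (hstep : g.dist (path (s + 1)) k = g.dist (path s) k + 1) :
    g.dist (path (s + 2)) k = g.dist (path (s + 1)) k + 1 := by
  rcases tree_adj_dist' ht (hadj (s + 1) (by omega)) k with h | h
  · exact h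
  · exfalso
    replace h : g.dist (path (s + 1)) k = g.dist (path (s + 2)) k + 1 := h
    have hadj2 : g.Adj (path (s + 1)) (path (s + 2)) := hadj (s + 1) (by omega)
    have hne : path s ≠ path (s + 2) := by
      intro hEq
      have := dist_path_pair ht.isConnected hadj h0 hD s (s + 2) (by omega) hs
      rw [hEq, SimpleGraph.dist_self] at this; omega
    exact tree_merge ht (hadj s (by omega)) hadj2.symm hne
      (ℓ := g.dist (path s) k) rfl (by omega) (by omega)

lemma vshape_chain {k : Fin n} {s : ℕ} (hs : s + 1 ≤ D)
    (hstep : g.dist (path (s + 1)) k = g.dist (path s) k + 1) :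
    ∀ t, s + 1 ≤ t → t ≤ D →
      g.dist (path t) k = g.dist (path (s + 1)) k + (t - (s + 1)) ∧
      (t = s + 1 ∨ g.dist (path t) k = g.dist (path (t - 1)) k + 1) := by
  intro t
  induction t with
  | zero => omega
  | succ t ih =>
    intro h1 h2
    rcases Nat.lt_or_ge t (s + 1) with hlt | hge
    · have : t = s := by omega
      subst this
      exact ⟨by omega, Or.inl rfl⟩
    · obtain ⟨ihA, ihB⟩ := ih hge (by omega)
      have hinc : g.dist (path (t + 1)) k = g.dist (path t) k + 1 := by
        rcases ihB with hts | hB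
        · subst hts; exact vshape_stepB ht hadj h0 hD (by omega) hstep
        · have := vshape_stepB ht hadj h0 hD (s := t - 1) (by omega) (by
            have he2 : t - 1 + 1 = t := by omega
            rw [he2]; exact hB)
          have he1 : t - 1 + 2 = t + 1 := by omega
          have he2 : t - 1 + 1 = t := by omega
          rw [he1, he2] at this; exact this
      refine ⟨by omega, Or.inr (by simpa using hinc)⟩

/-- the distance from a point on the geodesic to any vertex `k` is on one of the two lines. -/
lemma vshape {k : Fin n} : ∀ s ≤ D,
    g.dist (path s) k + s = g.dist r k ∨
    g.dist (path s) k + (D - s) = g.dist (path D) k := by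
  intro s
  induction s with
  | zero => intro _; left; simp [h0]
  | succ s ih =>
    intro hsD
    have htri : g.dist (path D) k ≤ g.dist (path D) (path (s+1)) + g.dist (path (s+1)) k :=
      ht.isConnected.dist_triangle
    have hpp : g.dist (path D) (path (s+1)) = D - (s+1) := by
      rw [SimpleGraph.dist_comm]
      exact dist_path_pair ht.isConnected hadj h0 hD (s+1) D hsD le_rfl
    rcases ih (by omega) with hL | hR
    · rcases tree_adj_dist' ht (hadj s (by omega)) k with h | h
      · have := (vshape_chain ht hadj h0 hD hsD h D hsD le_rfl).1
        right; omega
      · left; omega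
    · rcases tree_adj_dist' ht (hadj s (by omega)) k with h | h
      · right; rw [hpp] at htri; omega
      · right; rw [hpp] at htri; omega

omit hD in
lemma vshape_parity {k : Fin n} : ∀ s ≤ D,
    (g.dist (path s) k + s) % 2 = g.dist r k % 2 := by
  intro s
  induction s with
  | zero => intro _; simp [h0]
  | succ s ih =>
    intro hsD
    have := ih (by omega)
    rcases tree_adj_dist' ht (hadj s (by omega)) k with h | h <;> omega

end PathLemmas

section Counting

open Classical in
lemma natCard_eq_filter (p : Fin n → Prop) :
    Nat.card {k : Fin n | p k} = (univ.filter p).card := by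
  rw [Nat.card_eq_fintype_card]
  simp [Fintype.card_subtype]

open Classical in
lemma succCount_eq_filter (g : SimpleGraph (Fin n)) (r v : Fin n) (ℓ : ℕ) :
    succCount g r v ℓ =
      (univ.filter (fun j => g.dist v j = ℓ ∧ g.dist r j = g.dist r v + ℓ)).card := by
  rw [succCount, natCard_eq_filter]
  congr

lemma succCount_zero (hc : g.Connected) (v : Fin n) : succCount g r v 0 = 1 := by
  classical
  rw [succCount_eq_filter]
  have : (univ.filter (fun j => g.dist v j = 0 ∧ g.dist r j = g.dist r v + 0)) = {v} := by
    ext j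
    simp only [mem_filter, mem_univ, true_and, mem_singleton, Nat.add_zero,
      hc.dist_eq_zero_iff]
    constructor
    · rintro ⟨h1, _⟩; exact h1.symm
    · rintro rfl; exact ⟨rfl, rfl⟩
  rw [this, card_singleton]

open Classical in
noncomputable def childrenF (g : SimpleGraph (Fin n)) (r v : Fin n) : Finset (Fin n) :=
  univ.filter (fun c => g.Adj v c ∧ g.dist r c = g.dist r v + 1)

lemma succCount_succ (ht : g.IsTree) (r v : Fin n) (ℓ : ℕ) :
    succCount g r v (ℓ + 1) = ∑ c ∈ childrenF g r v, succCount g r c ℓ := by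
  classical
  rw [succCount_eq_filter]
  have hset : (univ.filter (fun k => g.dist v k = ℓ + 1 ∧ g.dist r k = g.dist r v + (ℓ + 1)))
      = (childrenF g r v).biUnion
          (fun c => univ.filter (fun k => g.dist c k = ℓ ∧ g.dist r k = g.dist r c + ℓ)) := by
    ext k
    simp only [mem_filter, mem_univ, true_and, mem_biUnion, childrenF]
    constructor
    · rintro ⟨h1, h2⟩
      obtain ⟨p, hp, _⟩ := exists_geodesic ht.isConnected v k
      cases p with
      | nil => rw [Walk.length_nil] at hp; omega
      | @cons _ c _ hadj q =>
        rw [Walk.length_cons, h1] at hp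
        have hq : g.dist c k ≤ ℓ := by
          have := SimpleGraph.dist_le q; omega
        have htr1 : g.dist v k ≤ g.dist v c + g.dist c k := ht.isConnected.dist_triangle
        have htr2 : g.dist r k ≤ g.dist r c + g.dist c k := ht.isConnected.dist_triangle
        have htr3 : g.dist r c ≤ g.dist r v + g.dist v c := ht.isConnected.dist_triangle
        have hvc : g.dist v c ≤ 1 := adj_dist_le_one hadj
        refine ⟨c, ⟨⟨hadj, by omega⟩, by omega, by omega⟩⟩
    · rintro ⟨c, ⟨hadj, hdc⟩, h1, h2⟩
      have htr1 : g.dist v k ≤ g.dist v c + g.dist c k := ht.isConnected.dist_triangle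
      have htr2 : g.dist r k ≤ g.dist r v + g.dist v k := ht.isConnected.dist_triangle
      have hvc : g.dist v c ≤ 1 := adj_dist_le_one hadj
      exact ⟨by omega, by omega⟩
  rw [hset, Finset.card_biUnion]
  · exact Finset.sum_congr rfl fun c _ => (succCount_eq_filter g r c ℓ).symm
  · intro c hc c' hc' hne
    rw [Function.onFun, Finset.disjoint_left]
    intro k hk hk'
    simp only [childrenF, Finset.mem_coe, mem_filter, mem_univ, true_and] at hc hc'
    simp only [mem_filter, mem_univ, true_and] at hk hk'
    refine tree_merge ht (u := v) (k := k) hc.1.symm hc'.1.symm hne (ℓ := ℓ) hk.1 hk'.1 ?_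
    have htr1 : g.dist v k ≤ g.dist v c + g.dist c k := ht.isConnected.dist_triangle
    have htr2 : g.dist r k ≤ g.dist r v + g.dist v k := ht.isConnected.dist_triangle
    have hvc : g.dist v c ≤ 1 := adj_dist_le_one hc.1
    omega

lemma dist_getVert_le (hc : g.Connected) {u v : Fin n} (w : g.Walk u v) :
    ∀ t, g.dist u (w.getVert t) ≤ t := by
  intro t
  induction t with
  | zero => rw [w.getVert_zero]; simp
  | succ t ih =>
    rcases Nat.lt_or_ge t w.length with hlt | hge
    · have hadj := w.adj_getVert_succ hlt
      have := hc.dist_triangle (u := u) (v := w.getVert t) (w := w.getVert (t + 1))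
      have := adj_dist_le_one hadj
      omega
    · rw [w.getVert_of_length_le (by omega), ← w.getVert_of_length_le hge]
      omega

lemma card_children_le [DecidableRel g.Adj] (ht : g.IsTree) (v : Fin n)
    (hv : 1 ≤ g.dist r v) : (childrenF g r v).card + 1 ≤ g.degree v := by
  classical
  obtain ⟨w, hw, _⟩ := exists_geodesic ht.isConnected r v
  set p := w.getVert (g.dist r v - 1) with hp
  have hadj : g.Adj p v := by
    have h1 : g.dist r v - 1 < w.length := by omega
    have := w.adj_getVert_succ h1
    rw [show g.dist r v - 1 + 1 = w.length by omega, w.getVert_length] at this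
    exact this
  have hdp : g.dist r p ≤ g.dist r v - 1 := dist_getVert_le ht.isConnected w _
  have hsub : childrenF g r v ⊆ (g.neighborFinset v).erase p := by
    intro c hcm
    simp only [childrenF, mem_filter, mem_univ, true_and] at hcm
    rw [Finset.mem_erase, SimpleGraph.mem_neighborFinset]
    refine ⟨?_, hcm.1⟩
    intro hEq
    rw [hEq] at hcm
    omega
  have hc1 := Finset.card_le_card hsub
  have hc2 : ((g.neighborFinset v).erase p).card = g.degree v - 1 := by
    rw [Finset.card_erase_of_mem ((SimpleGraph.mem_neighborFinset _ _ _).mpr hadj.symm),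
      g.card_neighborFinset_eq_degree]
  have hdeg : 1 ≤ g.degree v := by
    rw [← g.card_neighborFinset_eq_degree]
    exact Finset.card_pos.mpr ⟨p, (SimpleGraph.mem_neighborFinset _ _ _).mpr hadj.symm⟩
  omega

lemma card_children_ge [DecidableRel g.Adj] (ht : g.IsTree) (v : Fin n) :
    g.degree v ≤ (childrenF g r v).card + 1 := by
  classical
  set N := g.neighborFinset v with hN
  have hsub : childrenF g r v ⊆ N := by
    intro c hcm
    simp only [childrenF, mem_filter, mem_univ, true_and] at hcm
    exact (SimpleGraph.mem_neighborFinset _ _ _).mpr hcm.1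
  have hone : (N \ childrenF g r v).card ≤ 1 := by
    rw [Finset.card_le_one]
    intro c hcm c' hcm'
    rw [Finset.mem_sdiff, SimpleGraph.mem_neighborFinset] at hcm hcm'
    obtain ⟨ha, hnc⟩ := hcm
    obtain ⟨ha', hnc'⟩ := hcm'
    have hdc : g.dist r c + 1 = g.dist r v := by
      rcases tree_adj_dist' ht ha r with h | h
      · exfalso
        apply hnc
        simp only [childrenF, mem_filter, mem_univ, true_and]
        refine ⟨ha, ?_⟩
        rw [SimpleGraph.dist_comm (u := r) (v := c), SimpleGraph.dist_comm (u := r) (v := v)]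
        omega
      · rw [SimpleGraph.dist_comm (u := r) (v := c), SimpleGraph.dist_comm (u := r) (v := v)]
        omega
    have hdc' : g.dist r c' + 1 = g.dist r v := by
      rcases tree_adj_dist' ht ha' r with h | h
      · exfalso
        apply hnc'
        simp only [childrenF, mem_filter, mem_univ, true_and]
        refine ⟨ha', ?_⟩
        rw [SimpleGraph.dist_comm (u := r) (v := c'), SimpleGraph.dist_comm (u := r) (v := v)]
        omega
      · rw [SimpleGraph.dist_comm (u := r) (v := c'), SimpleGraph.dist_comm (u := r) (v := v)]
        omega
    by_contra hne
    refine tree_merge ht (u := v) (k := r) ha.symm ha'.symm hne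
      (ℓ := g.dist r v - 1) ?_ ?_ ?_
    · rw [SimpleGraph.dist_comm]; omega
    · rw [SimpleGraph.dist_comm]; omega
    · rw [SimpleGraph.dist_comm]; omega
  have := Finset.card_sdiff_add_card_eq_card hsub
  rw [← g.card_neighborFinset_eq_degree, ← hN]
  omega

lemma sum_le_sum_of_card_le {A B : Finset (Fin n)} {f gf : Fin n → ℕ}
    (hcard : B.card ≤ A.card) (hle : ∀ a ∈ A, ∀ b ∈ B, gf b ≤ f a) :
    ∑ b ∈ B, gf b ≤ ∑ a ∈ A, f a := by
  rcases B.eq_empty_or_nonempty with rfl | hB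
  · simp
  · have hA : A.Nonempty := Finset.card_pos.mp (lt_of_lt_of_le (Finset.card_pos.mpr hB) hcard)
    obtain ⟨a0, ha0, hmin⟩ := A.exists_min_image f hA
    calc ∑ b ∈ B, gf b ≤ ∑ _b ∈ B, f a0 := Finset.sum_le_sum (fun b hb => hle a0 ha0 b hb)
      _ = B.card * f a0 := by rw [Finset.sum_const, smul_eq_mul]
      _ ≤ A.card * f a0 := Nat.mul_le_mul_right _ hcard
      _ = ∑ _a ∈ A, f a0 := by rw [Finset.sum_const, smul_eq_mul]
      _ ≤ ∑ a ∈ A, f a := Finset.sum_le_sum (fun a ha => hmin a ha)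

lemma succCount_mono [DecidableRel g.Adj] (ht : g.IsTree)
    (hdeg : ∀ i j : Fin n, g.dist r i < g.dist r j → g.degree j ≤ g.degree i) :
    ∀ ℓ, ∀ i j : Fin n, g.dist r j = g.dist r i + 1 → succCount g r j ℓ ≤ succCount g r i ℓ := by
  intro ℓ
  induction ℓ with
  | zero =>
    intro i j _
    rw [succCount_zero ht.isConnected, succCount_zero ht.isConnected]
  | succ ℓ ih =>
    intro i j hij
    rw [succCount_succ ht, succCount_succ ht]
    apply sum_le_sum_of_card_le
    · have h1 := card_children_le (r := r) (ht := ht) (v := j) (by omega)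
      have h2 := card_children_ge (r := r) (ht := ht) (v := i)
      have h3 := hdeg i j (by omega)
      omega
    · intro c hc c' hc'
      classical
      simp only [childrenF, mem_filter, mem_univ, true_and] at hc hc'
      exact ih c c' (by omega)

end Counting

lemma sum_reindex (c : ℕ → ℕ) : ∀ d, 1 ≤ d → ∑ m ∈ Finset.range (2 * d + 1), c m
    = c 0 + (∑ t ∈ Finset.Ico 1 d, (c (2 * t - 1) + c (2 * t))) + c (2 * d - 1) + c (2 * d) := by
  intro d hd1
  induction d with
  | zero => omega
  | succ d ih =>
    rcases Nat.eq_or_lt_of_le hd1 with h1 | h1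
    · have : d = 0 := by omega
      subst this
      simp [Finset.sum_range_succ]
    · have hd : 1 ≤ d := by omega
      have ih' := ih hd
      have e : 2 * (d + 1) + 1 = (2 * d + 1) + 1 + 1 := by ring
      rw [e, Finset.sum_range_succ, Finset.sum_range_succ, ih',
        Finset.sum_Ico_succ_top hd]
      simp only [show 2 * d + 1 + 1 = 2 * d + 2 from by omega,
        show 2 * (d + 1) = 2 * d + 2 from by omega,
        show 2 * (d + 1) - 1 = 2 * d + 1 from by omega,
        show 2 * d + 2 - 1 = 2 * d + 1 from by omega]
      omega

open Classical in
lemma ball_formula (ht : g.IsTree) (i : Fin n) (d : ℕ) (hd1 : 1 ≤ d) (hd : d ≤ g.dist r i)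
    (path : ℕ → Fin n) (h0 : path 0 = r) (hi : path (g.dist r i) = i)
    (hadj : ∀ t < g.dist r i, g.Adj (path t) (path (t + 1))) :
    Nat.card {k : Fin n | g.dist i k ≤ d} =
      succCount g r (path (g.dist r i - d)) 0 +
        (∑ t ∈ Finset.Ico 1 d,
          (succCount g r (path (g.dist r i - d + t)) (t - 1) +
            succCount g r (path (g.dist r i - d + t)) t)) +
        succCount g r i (d - 1) + succCount g r i d := by
  set D := g.dist r i with hDdef
  have hD : g.dist r (path D) = D := by rw [hi]
  have hc := ht.isConnected
  -- the slices
  set Sm : ℕ → Finset (Fin n) := fun m =>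
    univ.filter (fun k => g.dist (path (D - d + (m + 1) / 2)) k = m / 2 ∧
      g.dist r k = (D - d + (m + 1) / 2) + m / 2) with hSm
  have key : (univ.filter (fun k => g.dist i k ≤ d))
      = (Finset.range (2 * d + 1)).biUnion Sm := by
    ext k
    simp only [mem_filter, mem_univ, true_and, mem_biUnion, Finset.mem_range, hSm]
    constructor
    · intro hk
      have ht1 : g.dist r k ≤ D + g.dist i k := by
        have := hc.dist_triangle (u := r) (v := i) (w := k); omega
      have ht2 : D ≤ g.dist r k + g.dist i k := by
        have := hc.dist_triangle (u := r) (v := k) (w := i)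
        have : g.dist k i = g.dist i k := SimpleGraph.dist_comm
        omega
      refine ⟨g.dist r k + d - D, by omega, ?_, ?_⟩
      · -- distance from the path vertex
        set m := g.dist r k + d - D with hm
        set s := D - d + (m + 1) / 2 with hs
        have hsD : s ≤ D := by omega
        have hv := vshape ht hadj h0 hD (k := k) s hsD
        have hpar := vshape_parity ht hadj h0 (k := k) D le_rfl
        rw [hi] at hv hpar
        have hps := (dist_path_exact hc hadj h0 hD s hsD).1
        have hpi := (dist_path_exact hc hadj h0 hD s hsD).2
        rw [hi] at hpi
        have htr1 : g.dist r k ≤ g.dist r (path s) + g.dist (path s) k := hc.dist_triangle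
        have htr2 : g.dist i k ≤ g.dist i (path s) + g.dist (path s) k := hc.dist_triangle
        have hcm : g.dist i (path s) = g.dist (path s) i := SimpleGraph.dist_comm
        omega
      · -- the depth equation
        omega
    · rintro ⟨m, hm, h1, h2⟩
      set s := D - d + (m + 1) / 2 with hs
      have hsD : s ≤ D := by omega
      have hpi := (dist_path_exact hc hadj h0 hD s hsD).2
      rw [hi] at hpi
      have htr : g.dist i k ≤ g.dist i (path s) + g.dist (path s) k := hc.dist_triangle
      have hcm : g.dist i (path s) = g.dist (path s) i := SimpleGraph.dist_comm
      omega
  have hdisj : ∀ m1 ∈ Finset.range (2 * d + 1), ∀ m2 ∈ Finset.range (2 * d + 1),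
      m1 ≠ m2 → Disjoint (Sm m1) (Sm m2) := by
    intro m1 _ m2 _ hne
    rw [Finset.disjoint_left]
    intro k hk1 hk2
    simp only [hSm, mem_filter, mem_univ, true_and] at hk1 hk2
    apply hne
    omega
  have hcard : ∀ m ∈ Finset.range (2 * d + 1),
      (Sm m).card = succCount g r (path (D - d + (m + 1) / 2)) (m / 2) := by
    intro m hm
    rw [Finset.mem_range] at hm
    have hsD : D - d + (m + 1) / 2 ≤ D := by omega
    have hps := (dist_path_exact hc hadj h0 hD _ hsD).1
    rw [succCount_eq_filter, hSm]
    congr 1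
    apply Finset.filter_congr
    intro k _
    rw [hps]
  have start : Nat.card {k : Fin n | g.dist i k ≤ d}
      = (univ.filter (fun k => g.dist i k ≤ d)).card := by
    rw [natCard_eq_filter]
    congr
  rw [start, key, Finset.card_biUnion hdisj, Finset.sum_congr rfl hcard,
    sum_reindex (fun m => succCount g r (path (D - d + (m + 1) / 2)) (m / 2)) d hd1]
  have e0 : D - d + (0 + 1) / 2 = D - d := by omega
  have ed1 : D - d + (2 * d - 1 + 1) / 2 = D := by omega
  have ed2 : D - d + (2 * d + 1) / 2 = D := by omega
  have esum : ∑ t ∈ Finset.Ico 1 d,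
      (succCount g r (path (D - d + (2 * t - 1 + 1) / 2)) ((2 * t - 1) / 2) +
        succCount g r (path (D - d + (2 * t + 1) / 2)) ((2 * t) / 2))
      = ∑ t ∈ Finset.Ico 1 d,
      (succCount g r (path (D - d + t)) (t - 1) + succCount g r (path (D - d + t)) t) := by
    apply Finset.sum_congr rfl
    intro t htm
    rw [Finset.mem_Ico] at htm
    rw [show (2 * t - 1 + 1) / 2 = t from by omega, show (2 * t - 1) / 2 = t - 1 from by omega,
      show (2 * t + 1) / 2 = t from by omega, show (2 * t) / 2 = t from by omega]
  simp only [e0, ed1, ed2, Nat.zero_div,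
    show (2 * d - 1) / 2 = d - 1 from by omega, show (2 * d) / 2 = d from by omega, hi]
  rw [esum]

theorem stmt_15 {n : ℕ} (g : SimpleGraph (Fin n)) [DecidableRel g.Adj]
    (r : Fin n) (h : ℕ) (hMH : IsMonotoneHierarchy g r h)
    (i : Fin n) (d : ℕ) (hd1 : 1 ≤ d) (hd : d ≤ g.dist r i)
    (path : ℕ → Fin n) (hpath0 : path 0 = r) (hpathi : path (g.dist r i) = i)
    (hpathadj : ∀ t < g.dist r i, g.Adj (path t) (path (t + 1))) :
    (ballCount g i d =
      succCount g r (path (g.dist r i - d)) 0 +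
        (∑ t ∈ Finset.Ico 1 d,
          (succCount g r (path (g.dist r i - d + t)) (t - 1) +
            succCount g r (path (g.dist r i - d + t)) t)) +
        succCount g r i (d - 1) + succCount g r i d) ∧
    (∀ j : Fin n, g.dist r j = g.dist r i + 1 → ballCount g j d ≤ ballCount g i d) := by
  obtain ⟨ht, hdeg, -, -, -⟩ := hMH
  constructor
  · exact ball_formula ht i d hd1 hd path hpath0 hpathi hpathadj
  · intro j hj
    obtain ⟨w, hw⟩ := (ht.isConnected r j).exists_walk_length_eq_dist
    set pj : ℕ → Fin n := fun t => w.getVert t with hpjdef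
    have hpj0 : pj 0 = r := w.getVert_zero
    have hpjD : pj (g.dist r j) = j := by
      rw [hpjdef]; simp only [← hw]; exact w.getVert_length
    have hpjadj : ∀ t < g.dist r j, g.Adj (pj t) (pj (t + 1)) :=
      fun t htl => w.adj_getVert_succ (by omega)
    have hdj : d ≤ g.dist r j := by omega
    have hbi := ball_formula ht i d hd1 hd path hpath0 hpathi hpathadj
    have hbj := ball_formula ht j d hd1 hdj pj hpj0 hpjD hpjadj
    have hDi : g.dist r (path (g.dist r i)) = g.dist r i := by rw [hpathi]
    have hDj : g.dist r (pj (g.dist r j)) = g.dist r j := by rw [hpjD]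
    have depth_i : ∀ s ≤ g.dist r i, g.dist r (path s) = s :=
      fun s hs => (dist_path_exact ht.isConnected hpathadj hpath0 hDi s hs).1
    have depth_j : ∀ s ≤ g.dist r j, g.dist r (pj s) = s :=
      fun s hs => (dist_path_exact ht.isConnected hpjadj hpj0 hDj s hs).1
    have mono := succCount_mono (r := r) ht hdeg
    show ballCount g j d ≤ ballCount g i d
    have hbi' : ballCount g i d = _ := hbi
    have hbj' : ballCount g j d = _ := hbj
    rw [hbi', hbj']
    have hstep : ∀ t ≤ d, ∀ ℓ, succCount g r (pj (g.dist r j - d + t)) ℓ ≤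
        succCount g r (path (g.dist r i - d + t)) ℓ := by
      intro t htd ℓ
      apply mono
      rw [depth_j _ (by omega), depth_i _ (by omega)]
      omega
    have h1 := hstep 0 (by omega) 0
    simp only [Nat.add_zero] at h1
    have hsum : ∑ t ∈ Finset.Ico 1 d,
        (succCount g r (pj (g.dist r j - d + t)) (t - 1) +
          succCount g r (pj (g.dist r j - d + t)) t) ≤
        ∑ t ∈ Finset.Ico 1 d,
        (succCount g r (path (g.dist r i - d + t)) (t - 1) +
          succCount g r (path (g.dist r i - d + t)) t) := by
      apply Finset.sum_le_sum
      intro t htm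
      rw [Finset.mem_Ico] at htm
      exact Nat.add_le_add (hstep t (by omega) (t - 1)) (hstep t (by omega) t)
    have h3 : succCount g r j (d - 1) ≤ succCount g r i (d - 1) := mono _ _ _ (by omega)
    have h4 : succCount g r j d ≤ succCount g r i d := mono _ _ _ (by omega)
    exact Nat.add_le_add (Nat.add_le_add (Nat.add_le_add h1 hsum) h3) h4
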